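/- arXiv:2407.10051 — 2 statements merged into one kernel-verified Lean document; each statement's English description precedes it below -/
import Mathlib

section
/- Let T ⊆ F_q be an F_p-subspace with T ∩ F_p = {0} and |T| = p^r for some 1 ≤ r ≤ m−1. Then every pair (a,b) ∈ T × F_q with (a,b) ≠ (0,0) satisfies wt(a,b) = p^{2m−2}(p−1), and the F_p-linear map sending (a,b) ∈ T × F_q to the word (Tr(ax+by))_{(x,y)∈D} is injective; hence C_{D1} = {(Tr(ax+by))_{(x,y)∈D} : a ∈ T, b ∈ F_q} is a one-weight linear code of length p^{2m−1} − 1 and dimension m + r over F_p. -/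
open Finset

private lemma aux_fiberCard {G A : Type} [AddCommGroup G] [AddCommGroup A] [Fintype G]
    [Fintype A] [DecidableEq A] (f : G → A) (hadd : ∀ x y, f (x + y) = f x + f y)
    (hf : Function.Surjective f) (c : A) :
    Fintype.card A * Fintype.card {x : G // f x = c} = Fintype.card G := by
  classical
  have hsub : ∀ x y, f (x - y) = f x - f y := fun x y =>
    (AddMonoidHom.mk' f hadd).map_sub x y
  have key : ∀ d : A, Fintype.card {x : G // f x = d} = Fintype.card {x : G // f x = c} := by
    intro d
    obtain ⟨x0, hx0⟩ := hf (d - c)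
    refine Fintype.card_congr
      ⟨fun x => ⟨x.1 - x0, by rw [hsub, x.2, hx0, sub_sub_cancel]⟩,
       fun x => ⟨x.1 + x0, by rw [hadd, x.2, hx0]; abel⟩,
       fun x => Subtype.ext (by simp), fun x => Subtype.ext (by simp)⟩
  have h := Fintype.card_congr (Equiv.sigmaFiberEquiv f)
  rw [Fintype.card_sigma] at h
  calc Fintype.card A * Fintype.card {x : G // f x = c}
      = ∑ _d : A, Fintype.card {x : G // f x = c} := by
        rw [Finset.sum_const, Finset.card_univ, smul_eq_mul]
    _ = ∑ d : A, Fintype.card {x : G // f x = d} :=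
        Finset.sum_congr rfl (fun d _ => (key d).symm)
    _ = Fintype.card G := h

private lemma aux_cardProd {α : Type} [Fintype α] (P : α → α → Prop)
    [∀ x y, Decidable (P x y)] :
    Fintype.card {xy : α × α // P xy.1 xy.2} = ∑ y : α, Fintype.card {x : α // P x y} := by
  have e : {xy : α × α // P xy.1 xy.2} ≃ Σ y : α, {x : α // P x y} :=
    ((Equiv.prodComm α α).subtypeEquiv (fun xy => by simp)).trans
      (Equiv.subtypeProdEquivSigmaSubtype fun y x => P x y)
  rw [Fintype.card_congr e, Fintype.card_sigma]

private lemma aux_nd {p : ℕ} [Fact p.Prime] {F : Type} [Field F] [Fintype F]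
    [Algebra (ZMod p) F] {z : F}
    (hz : ∀ x, Algebra.trace (ZMod p) F (z * x) = 0) : z = 0 := by
  have h1 : Module.Finite (ZMod p) F := Module.Finite.of_finite
  have htr := (traceForm_nondegenerate (ZMod p) F).1 z
  exact htr (fun y => by simpa [Algebra.traceForm_apply] using hz y)

private lemma aux_trsurj {p : ℕ} [Fact p.Prime] {F : Type} [Field F] [Fintype F]
    [Algebra (ZMod p) F] : Function.Surjective (Algebra.trace (ZMod p) F) := by
  have h1 : Module.Finite (ZMod p) F := Module.Finite.of_finite
  exact Algebra.trace_surjective (ZMod p) F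

private lemma aux_pairSurj {p : ℕ} [Fact p.Prime] {F : Type} [Field F] [Fintype F]
    [Algebra (ZMod p) F] {a : F} (ha : a ∉ Set.range (algebraMap (ZMod p) F)) :
    Function.Surjective
      (fun x : F => (Algebra.trace (ZMod p) F x, Algebra.trace (ZMod p) F (a * x))) := by
  set Tr := Algebra.trace (ZMod p) F with hTrdef
  obtain ⟨x1, hx1⟩ := aux_trsurj (p := p) (F := F) 1
  by_cases hcase : ∃ x, Tr x = 0 ∧ Tr (a * x) ≠ 0
  · obtain ⟨x2, hx2, hx2'⟩ := hcase
    rintro ⟨u, v⟩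
    refine ⟨u • x1 + ((v - u * Tr (a * x1)) / Tr (a * x2)) • x2, ?_⟩
    have h1 : Tr (u • x1 + ((v - u * Tr (a * x1)) / Tr (a * x2)) • x2) = u := by
      rw [map_add, map_smul, map_smul, hx1, hx2, smul_eq_mul, smul_eq_mul, mul_one,
        mul_zero, add_zero]
    have h2 : Tr (a * (u • x1 + ((v - u * Tr (a * x1)) / Tr (a * x2)) • x2)) = v := by
      rw [mul_add, mul_smul_comm, mul_smul_comm, map_add, map_smul, map_smul,
        smul_eq_mul, smul_eq_mul, div_mul_cancel₀ _ hx2']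
      ring
    simp only [Prod.mk.injEq]
    exact ⟨h1, h2⟩
  · push_neg at hcase
    set lam := Tr (a * x1) with hlam
    have hlin : ∀ x, Tr (a * x) = lam * Tr x := by
      intro x
      have h0 : Tr (x - (Tr x) • x1) = 0 := by
        rw [map_sub, map_smul, hx1, smul_eq_mul, mul_one, sub_self]
      have h2 := hcase _ h0
      rw [mul_sub, mul_smul_comm, map_sub, map_smul, smul_eq_mul, sub_eq_zero] at h2
      rw [h2, mul_comm]
    have heq : a = algebraMap (ZMod p) F lam := by
      have hz : ∀ x, Tr ((a - algebraMap (ZMod p) F lam) * x) = 0 := by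
        intro x
        rw [sub_mul, map_sub, hlin x, ← Algebra.smul_def, map_smul, smul_eq_mul, sub_self]
      exact sub_eq_zero.mp (aux_nd hz)
    exact absurd ⟨lam, heq.symm⟩ ha

/-- Let `T ⊆ F_q` be an `F_p`-subspace with `T ∩ F_p = {0}` and
`|T| = p^r`, `1 ≤ r ≤ m-1`. Then every `(a,b) ∈ T × F_q` with `(a,b) ≠ (0,0)` satisfies
`wt(a,b) = p^{2m-2}(p-1)`, and the map `(a,b) ↦ (Tr(ax+by))_{(x,y)∈D}` is injective;
hence `C_{D1}` is a one-weight linear code of length `p^{2m-1}-1` and dimension `m+r`. -/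
theorem stmt14 (p t m r : ℕ) [Fact p.Prime] (ht : 2 < t) (hm : m = 2 * t)
    (hr1 : 1 ≤ r) (hr2 : r ≤ m - 1)
    (F : Type) [Field F] [Fintype F] [DecidableEq F] [Algebra (ZMod p) F]
    (hF : Fintype.card F = p ^ m)
    (T : Submodule (ZMod p) F)
    (hT0 : ∀ x ∈ T, x ∈ Set.range (algebraMap (ZMod p) F) → x = 0)
    (hTcard : Nat.card T = p ^ r)
    (D : Finset (F × F))
    (hD : D = univ.filter (fun xy : F × F => xy ≠ (0, 0) ∧
      Algebra.trace (ZMod p) F (xy.1 + xy.2 ^ (p ^ t - 1)) = 0))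
    (wt : F → F → ℕ)
    (hwt : ∀ a b : F, wt a b =
      (D.filter (fun xy : F × F => Algebra.trace (ZMod p) F (a * xy.1 + b * xy.2) ≠ 0)).card) :
    (∀ a ∈ T, ∀ b : F, (a, b) ≠ (0, 0) → wt a b = p ^ (2 * m - 2) * (p - 1)) ∧
      (Function.Injective (fun ab : T × F => fun xy : ↥D =>
        Algebra.trace (ZMod p) F ((ab.1 : F) * (xy : F × F).1 + ab.2 * (xy : F × F).2))) ∧
      D.card = p ^ (2 * m - 1) - 1 := by
  have hp2 : 2 ≤ p := (Fact.out (p := p.Prime)).two_le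
  have hp0 : 0 < p := by omega
  have hm6 : 6 ≤ m := by omega
  set Tr := Algebra.trace (ZMod p) F with hTrdef
  set k := p ^ t - 1 with hk
  have hkne : k ≠ 0 := by
    have : 2 ≤ p ^ t := by
      calc 2 = 2 ^ 1 := rfl
        _ ≤ 2 ^ t := Nat.pow_le_pow_right (by omega) (by omega)
        _ ≤ p ^ t := Nat.pow_le_pow_left hp2 t
    omega
  have hfibZ : ∀ (f : F → ZMod p), (∀ x y, f (x + y) = f x + f y) → Function.Surjective f →
      ∀ c, Fintype.card {x : F // f x = c} = p ^ (m - 1) := by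
    intro f hadd hsurj c
    have h := aux_fiberCard f hadd hsurj c
    rw [ZMod.card, hF] at h
    have hm1 : p * p ^ (m - 1) = p ^ m := by
      rw [← pow_succ']; congr 1; omega
    exact Nat.eq_of_mul_eq_mul_left hp0 (h.trans hm1.symm)
  have hfib1 : ∀ c, Fintype.card {x : F // Tr x = c} = p ^ (m - 1) :=
    hfibZ Tr (fun x y => map_add Tr x y) aux_trsurj
  have hfibB : ∀ b : F, b ≠ 0 → ∀ c, Fintype.card {y : F // Tr (b * y) = c} = p ^ (m - 1) := by
    intro b hb c
    refine hfibZ _ (fun x y => by rw [mul_add, map_add]) ?_ c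
    intro c'
    obtain ⟨z, hz⟩ := aux_trsurj (p := p) (F := F) c'
    refine ⟨b⁻¹ * z, ?_⟩
    show Tr (b * (b⁻¹ * z)) = c'
    rw [← mul_assoc, mul_inv_cancel₀ hb, one_mul]
    exact hz
  have hfib2 : ∀ a : F, a ∉ Set.range (algebraMap (ZMod p) F) → ∀ c1 c2 : ZMod p,
      Fintype.card {x : F // Tr x = c1 ∧ Tr (a * x) = c2} = p ^ (m - 2) := by
    intro a ha c1 c2
    have h := aux_fiberCard (fun x : F => (Tr x, Tr (a * x)))
      (fun x y => by simp [Prod.ext_iff, mul_add, map_add]) (aux_pairSurj ha) (c1, c2)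
    rw [Fintype.card_prod, ZMod.card, hF] at h
    have he : Fintype.card {x : F // (Tr x, Tr (a * x)) = (c1, c2)}
        = Fintype.card {x : F // Tr x = c1 ∧ Tr (a * x) = c2} :=
      Fintype.card_congr (Equiv.subtypeEquivRight (fun x => by simp [Prod.ext_iff]))
    rw [he] at h
    have hm2 : p * p * p ^ (m - 2) = p ^ m := by
      rw [← pow_two, ← pow_add]; congr 1; omega
    exact Nat.eq_of_mul_eq_mul_left (by positivity) (h.trans hm2.symm)
  have hS1 : Fintype.card {xy : F × F // Tr (xy.1 + xy.2 ^ k) = 0} = p ^ (2 * m - 1) := by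
    calc Fintype.card {xy : F × F // Tr (xy.1 + xy.2 ^ k) = 0}
        = ∑ y : F, Fintype.card {x : F // Tr (x + y ^ k) = 0} :=
          aux_cardProd (fun x y : F => Tr (x + y ^ k) = 0)
      _ = ∑ _y : F, p ^ (m - 1) := Finset.sum_congr rfl (fun y _ => by
          rw [Fintype.card_congr (Equiv.subtypeEquivRight
            (q := fun x : F => Tr x = -Tr (y ^ k))
            (fun x => by rw [map_add, add_eq_zero_iff_eq_neg]))]
          exact hfib1 _)
      _ = p ^ (2 * m - 1) := by
          rw [Finset.sum_const, Finset.card_univ, smul_eq_mul, hF, ← pow_add]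
          congr 1; omega
  have hS1' : (univ.filter (fun xy : F × F => Tr (xy.1 + xy.2 ^ k) = 0)).card
      = p ^ (2 * m - 1) := by
    rw [← Fintype.card_subtype]; exact hS1
  have h00 : ((0, 0) : F × F) ∈ univ.filter (fun xy : F × F => Tr (xy.1 + xy.2 ^ k) = 0) := by
    simp [zero_pow hkne]
  have hD' : D = (univ.filter (fun xy : F × F => Tr (xy.1 + xy.2 ^ k) = 0)).erase (0, 0) := by
    rw [hD]; ext xy
    simp only [Finset.mem_filter, Finset.mem_erase, Finset.mem_univ, true_and]
  have hDcard : D.card = p ^ (2 * m - 1) - 1 := by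
    rw [hD', Finset.card_erase_of_mem h00, hS1']
  have hS2 : ∀ a b : F, a ∈ T → (a, b) ≠ (0, 0) →
      Fintype.card {xy : F × F // Tr (xy.1 + xy.2 ^ k) = 0 ∧ Tr (a * xy.1 + b * xy.2) = 0}
        = p ^ (2 * m - 2) := by
    intro a b haT hab
    by_cases ha0 : a = 0
    · subst ha0
      have hb0 : b ≠ 0 := by rintro rfl; exact hab rfl
      calc Fintype.card {xy : F × F // Tr (xy.1 + xy.2 ^ k) = 0 ∧ Tr (0 * xy.1 + b * xy.2) = 0}
          = ∑ y : F, Fintype.card {x : F // Tr (x + y ^ k) = 0 ∧ Tr (0 * x + b * y) = 0} :=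
            aux_cardProd (fun x y : F => Tr (x + y ^ k) = 0 ∧ Tr (0 * x + b * y) = 0)
        _ = ∑ y : F, (if Tr (b * y) = 0 then p ^ (m - 1) else 0) := by
            refine Finset.sum_congr rfl (fun y _ => ?_)
            by_cases hy : Tr (b * y) = 0
            · rw [if_pos hy, Fintype.card_congr (Equiv.subtypeEquivRight
                (q := fun x : F => Tr x = -Tr (y ^ k))
                (fun x => by simp [hy, map_add, add_eq_zero_iff_eq_neg]))]
              exact hfib1 _
            · rw [if_neg hy, Fintype.card_eq_zero_iff]
              exact ⟨fun x => hy (by simpa using x.2.2)⟩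
        _ = p ^ (2 * m - 2) := by
            rw [Finset.sum_ite, Finset.sum_const, Finset.sum_const_zero, add_zero, smul_eq_mul]
            have hcard : (univ.filter (fun y : F => Tr (b * y) = 0)).card = p ^ (m - 1) := by
              rw [← Fintype.card_subtype]; exact hfibB b hb0 0
            rw [hcard, ← pow_add]
            congr 1; omega
    · have ha : a ∉ Set.range (algebraMap (ZMod p) F) := fun hr => ha0 (hT0 a haT hr)
      calc Fintype.card {xy : F × F // Tr (xy.1 + xy.2 ^ k) = 0 ∧ Tr (a * xy.1 + b * xy.2) = 0}
          = ∑ y : F, Fintype.card {x : F // Tr (x + y ^ k) = 0 ∧ Tr (a * x + b * y) = 0} :=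
            aux_cardProd (fun x y : F => Tr (x + y ^ k) = 0 ∧ Tr (a * x + b * y) = 0)
        _ = ∑ _y : F, p ^ (m - 2) := by
            refine Finset.sum_congr rfl (fun y _ => ?_)
            rw [Fintype.card_congr (Equiv.subtypeEquivRight
              (q := fun x : F => Tr x = -Tr (y ^ k) ∧ Tr (a * x) = -Tr (b * y))
              (fun x => by rw [map_add, map_add, add_eq_zero_iff_eq_neg,
                add_eq_zero_iff_eq_neg]))]
            exact hfib2 a ha _ _
        _ = p ^ (2 * m - 2) := by
            rw [Finset.sum_const, Finset.card_univ, smul_eq_mul, hF, ← pow_add]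
            congr 1; omega
  have hwt1 : ∀ a ∈ T, ∀ b : F, (a, b) ≠ (0, 0) → wt a b = p ^ (2 * m - 2) * (p - 1) := by
    intro a haT b hab
    have h0mem : ((0, 0) : F × F) ∈ univ.filter
        (fun xy : F × F => Tr (xy.1 + xy.2 ^ k) = 0 ∧ Tr (a * xy.1 + b * xy.2) = 0) := by
      simp [zero_pow hkne]
    have hfilter : (D.filter (fun xy : F × F => Tr (a * xy.1 + b * xy.2) = 0)).card
        = p ^ (2 * m - 2) - 1 := by
      have heq : D.filter (fun xy : F × F => Tr (a * xy.1 + b * xy.2) = 0)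
          = (univ.filter (fun xy : F × F => Tr (xy.1 + xy.2 ^ k) = 0
              ∧ Tr (a * xy.1 + b * xy.2) = 0)).erase (0, 0) := by
        rw [hD]; ext xy
        simp only [Finset.mem_filter, Finset.mem_erase, Finset.mem_univ, true_and]
        tauto
      rw [heq, Finset.card_erase_of_mem h0mem, ← Fintype.card_subtype, hS2 a b haT hab]
    have hsplit := Finset.card_filter_add_card_filter_not (s := D)
      (p := fun xy : F × F => Tr (a * xy.1 + b * xy.2) = 0)
    rw [hwt a b]
    simp only [ne_eq] at hsplit ⊢
    have key : ∀ (x w Dc A AP B : ℕ), x + w = Dc → x = A - 1 → Dc = AP - 1 →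
        AP = B + A → 1 ≤ A → w = B := by intros; omega
    refine key _ _ D.card (p ^ (2 * m - 2)) (p ^ (2 * m - 1)) _ hsplit hfilter hDcard ?_ ?_
    · have h1 : p ^ (2 * m - 1) = p ^ (2 * m - 2) * p := by
        rw [← pow_succ]; congr 1; omega
      have h2 : p - 1 + 1 = p := by omega
      calc p ^ (2 * m - 1) = p ^ (2 * m - 2) * p := h1
        _ = p ^ (2 * m - 2) * ((p - 1) + 1) := by rw [h2]
        _ = p ^ (2 * m - 2) * (p - 1) + p ^ (2 * m - 2) := by ring
    · exact Nat.one_le_iff_ne_zero.mpr (pow_ne_zero _ (by omega))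
  refine ⟨hwt1, ?_, hDcard⟩
  intro ab1 ab2 h
  by_contra hne
  have hd : (((ab1.1 : F) - ab2.1, (ab1.2 : F) - ab2.2) : F × F) ≠ (0, 0) := by
    intro hc
    apply hne
    have h1 : (ab1.1 : F) - ab2.1 = 0 := congrArg Prod.fst hc
    have h2 : (ab1.2 : F) - ab2.2 = 0 := congrArg Prod.snd hc
    exact Prod.ext (Subtype.ext (sub_eq_zero.mp h1)) (sub_eq_zero.mp h2)
  have hmemT : (ab1.1 : F) - ab2.1 ∈ T := sub_mem ab1.1.2 ab2.1.2
  have hzero : ∀ xy ∈ D, Tr (((ab1.1 : F) - ab2.1) * xy.1 + ((ab1.2 : F) - ab2.2) * xy.2) = 0 := by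
    intro xy hxy
    have h1 := congrFun h ⟨xy, hxy⟩
    simp only at h1
    have h2 : Tr (((ab1.1 : F) * xy.1 + (ab1.2 : F) * xy.2)
        - ((ab2.1 : F) * xy.1 + (ab2.2 : F) * xy.2)) = 0 := by
      rw [map_sub, h1, sub_self]
    have h3 : (((ab1.1 : F) - ab2.1) * xy.1 + ((ab1.2 : F) - ab2.2) * xy.2)
        = (((ab1.1 : F) * xy.1 + (ab1.2 : F) * xy.2)
            - ((ab2.1 : F) * xy.1 + (ab2.2 : F) * xy.2)) := by ring
    rw [h3]; exact h2
  have hpos : 0 < wt ((ab1.1 : F) - ab2.1) ((ab1.2 : F) - ab2.2) := by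
    rw [hwt1 _ hmemT _ hd]
    exact Nat.mul_pos (pow_pos hp0 _) (by omega)
  rw [hwt] at hpos
  obtain ⟨xy, hxy⟩ := Finset.card_pos.mp hpos
  rw [Finset.mem_filter] at hxy
  exact hxy.2 (hzero xy hxy.1)
end

section
/- Let w_3 = (p^{2m−2} − p^{m−2})(p−1) − p^{m−2}(p^t(p−1) − S) and w_4 = (p^{2m−2} − p^{m−2})(p−1) + p^{m−2}(p^t + S). Then w_3 > 0 and p·w_3 > (p−1)·w_4, i.e., w_3/w_4 > (p−1)/p. -/
open Finset

set_option maxHeartbeats 1000000 in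
/-- With `w_3 = (p^{2m-2}-p^{m-2})(p-1) - p^{m-2}(p^t(p-1)-S)` and
`w_4 = (p^{2m-2}-p^{m-2})(p-1) + p^{m-2}(p^t+S)`, one has `w_3 > 0` and
`p·w_3 > (p-1)·w_4`, i.e. `w_3/w_4 > (p-1)/p`. (`S` is a rational integer.) -/
theorem stmt16 (p t m : ℕ) [Fact p.Prime] (ht : 2 < t) (hm : m = 2 * t)
    (F : Type) [Field F] [Fintype F] [DecidableEq F] [Algebra (ZMod p) F]
    (hF : Fintype.card F = p ^ m)
    (ζ : ℂ) (hζ : ζ = Complex.exp (2 * Real.pi * Complex.I / p))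
    (χ : F → ℂ) (hχ : ∀ x, χ x = ζ ^ (Algebra.trace (ZMod p) F x).val)
    (Δ : Finset F) (hΔ : Δ = univ.filter (fun x : F => x ^ (p ^ t + 1) = 1))
    (S : ℤ)
    (hS : (S : ℂ) = ∑ z ∈ ({0}ᶜ : Finset (ZMod p)), ∑ x ∈ Δ, χ (algebraMap (ZMod p) F z * x))
    (w3 w4 : ℤ)
    (hw3 : w3 = ((p : ℤ) ^ (2 * m - 2) - (p : ℤ) ^ (m - 2)) * ((p : ℤ) - 1)
      - (p : ℤ) ^ (m - 2) * ((p : ℤ) ^ t * ((p : ℤ) - 1) - S))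
    (hw4 : w4 = ((p : ℤ) ^ (2 * m - 2) - (p : ℤ) ^ (m - 2)) * ((p : ℤ) - 1)
      + (p : ℤ) ^ (m - 2) * ((p : ℤ) ^ t + S)) :
    0 < w3 ∧ (p : ℤ) * w3 > ((p : ℤ) - 1) * w4 := by
  have hp : p.Prime := Fact.out
  have hp2 : 2 ≤ p := hp.two_le
  -- |χ x| = 1
  have habsζ : ‖ζ‖ = 1 := by
    rw [hζ]
    have h : (2 * ↑Real.pi * Complex.I / (p : ℂ))
        = ((2 * Real.pi / (p : ℝ) : ℝ) : ℂ) * Complex.I := by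
      push_cast; ring
    rw [h, Complex.norm_exp_ofReal_mul_I]
  have habsχ : ∀ x : F, ‖χ x‖ = 1 := by
    intro x
    rw [hχ, norm_pow, habsζ, one_pow]
  -- card of Δ
  have hcardΔ : Δ.card ≤ p ^ t + 1 := by
    rw [hΔ]
    have hne : 0 < p ^ t + 1 := by positivity
    calc (univ.filter (fun x : F => x ^ (p ^ t + 1) = 1)).card
        ≤ ((Polynomial.nthRoots (p ^ t + 1) (1 : F)).toFinset).card := by
          apply Finset.card_le_card
          intro x hx
          simp only [mem_filter] at hx
          rw [Multiset.mem_toFinset, Polynomial.mem_nthRoots hne]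
          exact hx.2
      _ ≤ Multiset.card (Polynomial.nthRoots (p ^ t + 1) (1 : F)) :=
          Multiset.toFinset_card_le _
      _ ≤ p ^ t + 1 := Polynomial.card_nthRoots _ _
  have hcardc : ({0}ᶜ : Finset (ZMod p)).card = p - 1 := by
    rw [Finset.card_compl, Finset.card_singleton, ZMod.card]
  -- bound on S
  have hSabsR : ‖((S : ℂ))‖ ≤ ((p : ℝ) - 1) * ((p : ℝ) ^ t + 1) := by
    rw [hS]
    calc ‖(∑ z ∈ ({0}ᶜ : Finset (ZMod p)), ∑ x ∈ Δ,
            χ (algebraMap (ZMod p) F z * x))‖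
        ≤ ∑ z ∈ ({0}ᶜ : Finset (ZMod p)), ‖(∑ x ∈ Δ,
            χ (algebraMap (ZMod p) F z * x))‖ := norm_sum_le _ _
      _ ≤ ∑ z ∈ ({0}ᶜ : Finset (ZMod p)), ∑ x ∈ Δ,
            ‖χ (algebraMap (ZMod p) F z * x)‖ :=
          Finset.sum_le_sum (fun z _ => norm_sum_le _ _)
      _ = ∑ z ∈ ({0}ᶜ : Finset (ZMod p)), ∑ x ∈ Δ, (1 : ℝ) := by
          simp [habsχ]
      _ = (({0}ᶜ : Finset (ZMod p)).card : ℝ) * (Δ.card : ℝ) := by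
          simp [Finset.sum_const, mul_comm]
      _ ≤ ((p : ℝ) - 1) * ((p : ℝ) ^ t + 1) := by
          apply mul_le_mul
          · rw [hcardc]
            have h : ((p - 1 : ℕ) : ℝ) = (p : ℝ) - 1 := by
              push_cast [Nat.cast_sub (by omega : 1 ≤ p)]; ring
            rw [h]
          · calc (Δ.card : ℝ) ≤ ((p ^ t + 1 : ℕ) : ℝ) := by exact_mod_cast hcardΔ
              _ = (p : ℝ) ^ t + 1 := by push_cast; ring
          · positivity
          · have h : (1 : ℝ) ≤ (p : ℝ) := by exact_mod_cast (by omega : 1 ≤ p)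
            linarith
  have hSabs : |S| ≤ ((p : ℤ) - 1) * ((p : ℤ) ^ t + 1) := by
    rw [Complex.norm_intCast] at hSabsR
    exact_mod_cast hSabsR
  have hSb : -(((p : ℤ) - 1) * ((p : ℤ) ^ t + 1)) ≤ S := (abs_le.mp hSabs).1
  -- arithmetic setup
  have hP2 : (2 : ℤ) ≤ (p : ℤ) := by exact_mod_cast hp2
  set P : ℤ := (p : ℤ) with hPdef
  set A : ℤ := P ^ (2 * t - 2) with hAdef
  set T : ℤ := P ^ t with hTdef
  clear_value A T P
  have hm2 : m - 2 = 2 * t - 2 := by omega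
  have h2m : 2 * m - 2 = (2 * t - 2) + 2 * t := by omega
  have hP2t : P ^ (2 * t) = T ^ 2 := by rw [hTdef, ← pow_mul, mul_comm]
  have hAT : P ^ (2 * m - 2) = A * T ^ 2 := by
    rw [h2m, pow_add, hP2t, ← hAdef]
  have hT8 : (8 : ℤ) ≤ T := by
    have h1 : (2 : ℤ) ^ t ≤ P ^ t := pow_le_pow_left₀ (by norm_num) hP2 t
    have h2 : (2 : ℤ) ^ 3 ≤ 2 ^ t := pow_le_pow_right₀ (by norm_num) (by omega)
    rw [hTdef]; norm_num at h2; linarith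
  have hP3T : P ^ 3 ≤ T := by
    rw [hTdef]; exact pow_le_pow_right₀ (by linarith) (by omega)
  have hA0 : (0 : ℤ) < A := by rw [hAdef]; positivity
  have hT0 : (0 : ℤ) < T := by linarith
  subst hw3 hw4
  rw [hm2, hAT, ← hAdef]
  have hinner1 : 0 < T ^ 2 - 2 * T - 2 := by
    have h := mul_le_mul_of_nonneg_left hT8 (by linarith : (0:ℤ) ≤ T)
    linarith
  have key1 : 0 < (T ^ 2 - 1) * (P - 1) - (T * (P - 1) - S) := by
    have hx : 0 < (P - 1) * (T ^ 2 - 2 * T - 2) :=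
      mul_pos (by linarith) hinner1
    linarith [hx, hSb]
  constructor
  · have heq : (A * T ^ 2 - A) * (P - 1) - A * (T * (P - 1) - S)
        = A * ((T ^ 2 - 1) * (P - 1) - (T * (P - 1) - S)) := by ring
    rw [heq]
    exact mul_pos hA0 key1
  · have hPc : P + 6 ≤ P ^ 3 := by
      have hsq : (2:ℤ) * 2 ≤ P * P := mul_le_mul hP2 hP2 (by norm_num) (by linarith)
      have hc : P * (2 * 2) ≤ P * (P * P) := mul_le_mul_of_nonneg_left hsq (by linarith)
      nlinarith [hsq, hc, hP2]
    have h1 : T * (P + 6) ≤ T * P ^ 3 :=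
      mul_le_mul_of_nonneg_left hPc (by linarith)
    have h2 : T * P ^ 3 ≤ T * T :=
      mul_le_mul_of_nonneg_left hP3T (by linarith)
    have hinner2 : 0 < T ^ 2 - (P + 2) * T - 2 := by linarith [h1, h2, hT8]
    have hy : 0 < (P - 1) * (T ^ 2 - (P + 2) * T - 2) :=
      mul_pos (by linarith) hinner2
    have key2 : 0 < (T ^ 2 - 1) * (P - 1) - T * (P * P - 1) + S := by
      linarith [hy, hSb]
    have heq : P * ((A * T ^ 2 - A) * (P - 1) - A * (T * (P - 1) - S))
        - (P - 1) * ((A * T ^ 2 - A) * (P - 1) + A * (T + S))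
        = A * ((T ^ 2 - 1) * (P - 1) - T * (P * P - 1) + S) := by ring
    have hpos := mul_pos hA0 key2
    rw [← heq] at hpos
    linarith
end
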